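/- If a digraph D has a limit edge from an end ω to an end η, then ω ≤ η in the natural partial order on ends: for every pair of rays R_ω, R_η representing ω and η respectively there are infinitely many pairwise disjoint directed paths from R_ω to R_η. -/

import Mathlib

variable {V : Type*}

/-- Reachability from `a` to `b` by a directed walk staying inside the vertex set `S`. -/
def ReachIn (D : V → V → Prop) (S : Set V) (a b : V) : Prop :=
  a ∈ S ∧ b ∈ S ∧ Relation.ReflTransGen (fun x y => y ∈ S ∧ D x y) a b

/-- `C` is a strong component of the subdigraph of `D` induced on `S`. -/
def IsSCCIn (D : V → V → Prop) (S : Set V) (C : Set V) : Prop :=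
  ∃ a ∈ S, C = {b | ReachIn D S a b ∧ ReachIn D S b a}

/-- A directed ray in `D`. -/
def IsRay (D : V → V → Prop) (R : ℕ → V) : Prop :=
  Function.Injective R ∧ ∀ n, D (R n) (R (n + 1))

/-- A reverse directed ray in `D`. -/
def IsRevRay (D : V → V → Prop) (R : ℕ → V) : Prop :=
  Function.Injective R ∧ ∀ n, D (R (n + 1)) (R n)

/-- The ray `R` has a tail inside the vertex set `C`. -/
def HasTailIn (R : ℕ → V) (C : Set V) : Prop :=
  ∃ n, ∀ m, n ≤ m → R m ∈ C

/-- A solid ray: for every finite `X` it has a tail in some strong component of `D − X`. -/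
def Solid (D : V → V → Prop) (R : ℕ → V) : Prop :=
  IsRay D R ∧ ∀ X : Finset V, ∃ C, IsSCCIn D ((↑X : Set V)ᶜ) C ∧ HasTailIn R C

/-- Two solid rays are end-equivalent: for every finite `X` they have tails in the same
strong component of `D − X`. -/
def EndEquiv (D : V → V → Prop) (R R' : ℕ → V) : Prop :=
  ∀ X : Finset V, ∃ C, IsSCCIn D ((↑X : Set V)ᶜ) C ∧ HasTailIn R C ∧ HasTailIn R' C

/-- `Ω` is an end of `D`: the class of solid rays equivalent to some solid ray. -/
def IsEnd (D : V → V → Prop) (Ω : Set (ℕ → V)) : Prop :=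
  ∃ R, Solid D R ∧ Ω = {R' | Solid D R' ∧ EndEquiv D R R'}

/-- A (nonempty) directed path, recorded as its list of vertices. -/
def IsPathList (D : V → V → Prop) (l : List V) : Prop :=
  l ≠ [] ∧ l.Nodup ∧ l.Chain' D

/-- Infinitely many pairwise disjoint `A`–`B` paths in `D` (each meeting `A` precisely in its
first vertex and `B` precisely in its last vertex). -/
def DisjointPathsFrom (D : V → V → Prop) (A B : Set V) : Prop :=
  ∃ P : ℕ → List V,
    (∀ k, IsPathList D (P k)) ∧
    (∀ j k, j ≠ k → ∀ x ∈ P j, x ∉ P k) ∧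
    (∀ k, ∃ a, (P k).head? = some a ∧ a ∈ A) ∧
    (∀ k, ∃ b, (P k).getLast? = some b ∧ b ∈ B) ∧
    (∀ k, ∀ x ∈ (P k).tail, x ∉ A) ∧
    (∀ k, ∀ x ∈ (P k).dropLast, x ∉ B)

/-- A necklace in `D`: an inflated symmetric ray with finite branch sets (beads), given by its
beads together with the connecting (subdividing) paths in both directions. -/
structure Necklace (D : V → V → Prop) where
  bead : ℕ → Set V
  fwd : ℕ → List V
  bwd : ℕ → List V
  bead_fin : ∀ n, (bead n).Finite
  bead_nonempty : ∀ n, (bead n).Nonempty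
  bead_disj : ∀ m n, m ≠ n → Disjoint (bead m) (bead n)
  bead_strong : ∀ n, ∀ a ∈ bead n, ∀ b ∈ bead n, ReachIn D (bead n) a b
  fwd_path : ∀ n, IsPathList D (fwd n)
  bwd_path : ∀ n, IsPathList D (bwd n)
  fwd_head : ∀ n a, (fwd n).head? = some a → a ∈ bead n
  fwd_last : ∀ n b, (fwd n).getLast? = some b → b ∈ bead (n + 1)
  bwd_head : ∀ n a, (bwd n).head? = some a → a ∈ bead (n + 1)
  bwd_last : ∀ n b, (bwd n).getLast? = some b → b ∈ bead n
  fwd_inner : ∀ n, ∀ x ∈ (fwd n).tail.dropLast, ∀ m, x ∉ bead m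
  bwd_inner : ∀ n, ∀ x ∈ (bwd n).tail.dropLast, ∀ m, x ∉ bead m
  fwd_fwd_disj : ∀ m n, m ≠ n → ∀ x ∈ (fwd m).tail.dropLast, x ∉ (fwd n).tail.dropLast
  bwd_bwd_disj : ∀ m n, m ≠ n → ∀ x ∈ (bwd m).tail.dropLast, x ∉ (bwd n).tail.dropLast
  fwd_bwd_disj : ∀ m n, ∀ x ∈ (fwd m).tail.dropLast, x ∉ (bwd n).tail.dropLast

/-- The vertex set of a necklace. -/
def Necklace.verts {D : V → V → Prop} (N : Necklace D) : Set V :=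
  (⋃ n, N.bead n) ∪ {x | ∃ n, x ∈ N.fwd n ∨ x ∈ N.bwd n}

/-- A necklace is attached to `𝒰` if infinitely many of its beads meet every set in `𝒰`. -/
def Necklace.AttachedTo {D : V → V → Prop} (N : Necklace D) (𝒰 : Finset (Set V)) : Prop :=
  {n | ∀ U ∈ 𝒰, (N.bead n ∩ U).Nonempty}.Infinite

/-- A necklace represents the end of the solid ray `R`: for every finite `X`, all but finitely
many beads lie in the strong component of `D − X` in which `R` has a tail. -/
def NecklaceRepresents {D : V → V → Prop} (N : Necklace D) (R : ℕ → V) : Prop :=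
  ∀ X : Finset V, ∃ C, IsSCCIn D ((↑X : Set V)ᶜ) C ∧ HasTailIn R C ∧
    ∃ n₀, ∀ n, n₀ ≤ n → N.bead n ⊆ C

/-- `URankLE D 𝒰 S α`: the subdigraph of `D` induced on `S` has `𝒰`-rank at most `α`. -/
inductive URankLE (D : V → V → Prop) (𝒰 : Finset (Set V)) : Set V → Ordinal → Prop
  | base (S : Set V) (α : Ordinal) (U : Set V) (hU : U ∈ 𝒰) (h : (U ∩ S).Finite) :
      URankLE D 𝒰 S α
  | step (S : Set V) (α : Ordinal) (X : Finset V) (r : Set V → Ordinal)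
      (hr : ∀ C, IsSCCIn D (S \ ↑X) C → r C < α)
      (h : ∀ C, IsSCCIn D (S \ ↑X) C → URankLE D 𝒰 C (r C)) :
      URankLE D 𝒰 S α

/-- `D` (induced on `S`) has `𝒰`-rank exactly `α`. -/
def HasURank (D : V → V → Prop) (𝒰 : Finset (Set V)) (S : Set V) (α : Ordinal) : Prop :=
  URankLE D 𝒰 S α ∧ ∀ β < α, ¬ URankLE D 𝒰 S β

/-- A vertex-direction of `D`. -/
def IsVertexDirection (D : V → V → Prop) (f : Finset V → Set V) : Prop :=
  (∀ X : Finset V, IsSCCIn D ((↑X : Set V)ᶜ) (f X)) ∧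
  ∀ X Y : Finset V, X ⊆ Y → f Y ⊆ f X

/-- A separation `(A,B)` of `D`: `A ∪ B = V(D)` and no edge from `B∖A` to `A∖B`. -/
def IsSep (D : V → V → Prop) (A B : Set V) : Prop :=
  A ∪ B = Set.univ ∧ ∀ a ∈ B \ A, ∀ b ∈ A \ B, ¬ D a b

/-- A finite order separation `(A,B)` points towards the vertex-direction `f`. -/
def PointsTowards (D : V → V → Prop) (f : Finset V → Set V) (A B : Set V)
    (h : (A ∩ B).Finite) : Prop :=
  f h.toFinset ⊆ B \ A

/-- A finite order separation `(A,B)` points away from the vertex-direction `f`. -/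
def PointsAway (D : V → V → Prop) (f : Finset V → Set V) (A B : Set V)
    (h : (A ∩ B).Finite) : Prop :=
  f h.toFinset ⊆ A \ B

/-- The vertex `v` dominates the vertex-direction `f`. -/
def DomDir (D : V → V → Prop) (v : V) (f : Finset V → Set V) : Prop :=
  ∀ A B, IsSep D A B → ∀ h : (A ∩ B).Finite, PointsAway D f A B h → v ∈ A

/-- An infinite `v`–`B` fan: infinitely many `v`–`B` paths meeting pairwise precisely in `v`. -/
def Fan (D : V → V → Prop) (v : V) (B : Set V) : Prop :=
  ∃ P : ℕ → List V,
    (∀ k, IsPathList D (P k)) ∧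
    (∀ k, (P k).head? = some v) ∧
    (∀ k, 2 ≤ (P k).length) ∧
    (∀ k, ∃ b, (P k).getLast? = some b ∧ b ∈ B) ∧
    (∀ k, ∀ x ∈ (P k).dropLast, x ∉ B) ∧
    (∀ j k, j ≠ k → ∀ x ∈ (P j).tail, x ∉ (P k).tail)

/-- Limit edge between the ends of the solid rays `R` and `R'`. -/
def LimitEdgeEE (D : V → V → Prop) (R R' : ℕ → V) : Prop :=
  ∀ (X : Finset V) C C', IsSCCIn D ((↑X : Set V)ᶜ) C → HasTailIn R C →
    IsSCCIn D ((↑X : Set V)ᶜ) C' → HasTailIn R' C' → C ≠ C' →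
    ∃ a ∈ C, ∃ b ∈ C', D a b

/-- Limit edge from the vertex `v` to the end of the solid ray `R`. -/
def LimitEdgeVE (D : V → V → Prop) (v : V) (R : ℕ → V) : Prop :=
  ∀ (X : Finset V) C, IsSCCIn D ((↑X : Set V)ᶜ) C → HasTailIn R C → v ∉ C →
    ∃ b ∈ C, D v b

/-- Limit edge from the end of the solid ray `R` to the vertex `v`. -/
def LimitEdgeEV (D : V → V → Prop) (R : ℕ → V) (v : V) : Prop :=
  ∀ (X : Finset V) C, IsSCCIn D ((↑X : Set V)ᶜ) C → HasTailIn R C → v ∉ C →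
    ∃ a ∈ C, D a v

/-- A subdivided infinite out-star in `D` with centre `c`, given by its paths. -/
def IsStar (D : V → V → Prop) (c : V) (P : ℕ → List V) : Prop :=
  (∀ k, IsPathList D (P k)) ∧ (∀ k, (P k).head? = some c) ∧
  (∀ k, 2 ≤ (P k).length) ∧
  (∀ j k, j ≠ k → ∀ x ∈ (P j).tail, x ∉ (P k).tail)

/-- A directed comb in `D` with spine `R`, given by its (pairwise disjoint) paths each meeting
`R` precisely in its first vertex. -/
def IsComb (D : V → V → Prop) (R : ℕ → V) (P : ℕ → List V) : Prop :=
  IsRay D R ∧ (∀ k, IsPathList D (P k)) ∧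
  (∀ k, ∃ n, (P k).head? = some (R n)) ∧
  (∀ k, ∀ x ∈ (P k).tail, ∀ n, x ≠ R n) ∧
  (∀ j k, j ≠ k → ∀ x ∈ P j, x ∉ P k)

/-- A star in `D` whose `k`-th leaf is `a k`. -/
def StarAttachedWith (D : V → V → Prop) (a : ℕ → V) : Prop :=
  ∃ c P, IsStar D c P ∧ ∀ k, (P k).getLast? = some (a k)

/-- A comb in `D` whose `k`-th tooth is `a k`. -/
def CombAttachedWith (D : V → V → Prop) (a : ℕ → V) : Prop :=
  ∃ R P, IsComb D R P ∧ ∀ k, (P k).getLast? = some (a k)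

/-- `a` and `b` are consecutive entries of the list `l`. -/
def AdjInList (l : List V) (a b : V) : Prop :=
  ∃ l₁ l₂, l = l₁ ++ a :: b :: l₂

/-- The edge relation of (a subdigraph of `D` forming) the necklace `N`: all `D`-edges inside a
bead together with the edges of the connecting paths. -/
def Necklace.edges {D : V → V → Prop} (N : Necklace D) (a b : V) : Prop :=
  D a b ∧ ((∃ n, a ∈ N.bead n ∧ b ∈ N.bead n) ∨
    (∃ n, AdjInList (N.fwd n) a b ∨ AdjInList (N.bwd n) a b))

/-- A generalized ray: a directed ray (`true`) or a reverse directed ray (`false`). -/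
def IsGenRay (D : V → V → Prop) : Bool × (ℕ → V) → Prop
  | (true, R) => IsRay D R
  | (false, R) => IsRevRay D R

/-- Pre-end equivalence of generalized rays: infinitely many disjoint paths in both
directions. -/
def PreEquiv (D : V → V → Prop) (Q Q' : Bool × (ℕ → V)) : Prop :=
  DisjointPathsFrom D (Set.range Q.2) (Set.range Q'.2) ∧
  DisjointPathsFrom D (Set.range Q'.2) (Set.range Q.2)

/-- The pre-end `γ` includes the end represented by the solid ray `R`. -/
def IncludesEnd (D : V → V → Prop) (γ : Set (Bool × (ℕ → V))) (R : ℕ → V) : Prop :=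
  Solid D R ∧ ∀ R', Solid D R' → EndEquiv D R R' → (true, R') ∈ γ

/-- The set of edges of `D` from `A` to `B`. -/
def EdgesBetween (D : V → V → Prop) (A B : Set V) : Set (V × V) :=
  {e | D e.1 e.2 ∧ e.1 ∈ A ∧ e.2 ∈ B}

/-- A bundle of `D − X`. -/
def IsBundle (D : V → V → Prop) (X : Finset V) (E : Set (V × V)) : Prop :=
  E.Nonempty ∧
  ((∃ C C', IsSCCIn D ((↑X : Set V)ᶜ) C ∧ IsSCCIn D ((↑X : Set V)ᶜ) C' ∧ C ≠ C' ∧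
      E = EdgesBetween D C C') ∨
   (∃ v ∈ X, ∃ C, IsSCCIn D ((↑X : Set V)ᶜ) C ∧
      (E = EdgesBetween D {v} C ∨ E = EdgesBetween D C {v})))

/-- Compatibility `f(X) ⊇ f(Y)` between values of a direction (a strong component is regarded
as containing a bundle if it contains all its edges). -/
def DirCompat : Set V ⊕ Set (V × V) → Set V ⊕ Set (V × V) → Prop
  | Sum.inl C, Sum.inl C' => C' ⊆ C
  | Sum.inl C, Sum.inr E' => ∀ e ∈ E', e.1 ∈ C ∧ e.2 ∈ C
  | Sum.inr _, Sum.inl _ => False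
  | Sum.inr E, Sum.inr E' => E' ⊆ E

/-- A direction of `D`: maps each finite `X` to a strong component or a bundle of `D − X`,
compatibly. -/
def IsDirection (D : V → V → Prop) (f : Finset V → Set V ⊕ Set (V × V)) : Prop :=
  (∀ X : Finset V, (∃ C, IsSCCIn D ((↑X : Set V)ᶜ) C ∧ f X = Sum.inl C) ∨
    (∃ E, IsBundle D X E ∧ f X = Sum.inr E)) ∧
  ∀ X Y : Finset V, X ⊆ Y → DirCompat (f X) (f Y)

/-- An edge-direction: a direction whose value is a bundle for some finite `X`. -/
def IsEdgeDirection (D : V → V → Prop) (f : Finset V → Set V ⊕ Set (V × V)) : Prop :=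
  IsDirection D f ∧ ∃ (X : Finset V) (E : Set (V × V)), f X = Sum.inr E

/-- The three kinds of (potential) limit edges: end–end, vertex–end, end–vertex.
Ends are given as sets of (solid) rays. -/
inductive LimitEdgeObj (V : Type*) where
  | ee (Ω₁ Ω₂ : Set (ℕ → V))
  | ve (v : V) (Ω : Set (ℕ → V))
  | ev (Ω : Set (ℕ → V)) (v : V)

/-- `l` is a limit edge of `D`. -/
def IsLimitEdge (D : V → V → Prop) : LimitEdgeObj V → Prop
  | LimitEdgeObj.ee Ω₁ Ω₂ => IsEnd D Ω₁ ∧ IsEnd D Ω₂ ∧ Ω₁ ≠ Ω₂ ∧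
      ∀ R ∈ Ω₁, ∀ R' ∈ Ω₂, LimitEdgeEE D R R'
  | LimitEdgeObj.ve v Ω => IsEnd D Ω ∧ ∀ R ∈ Ω, LimitEdgeVE D v R
  | LimitEdgeObj.ev Ω v => IsEnd D Ω ∧ ∀ R ∈ Ω, LimitEdgeEV D R v

/-- `f` agrees with the map `f_λ` for the end–end limit edge `Ω₁Ω₂`. -/
def AgreesEE (D : V → V → Prop) (Ω₁ Ω₂ : Set (ℕ → V))
    (f : Finset V → Set V ⊕ Set (V × V)) : Prop :=
  ∀ (X : Finset V), ∀ R ∈ Ω₁, ∀ R' ∈ Ω₂, ∀ C C',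
    IsSCCIn D ((↑X : Set V)ᶜ) C → HasTailIn R C →
    IsSCCIn D ((↑X : Set V)ᶜ) C' → HasTailIn R' C' →
    (C = C' → f X = Sum.inl C) ∧ (C ≠ C' → f X = Sum.inr (EdgesBetween D C C'))

/-- `f` agrees with the map `f_λ` for the vertex–end limit edge `vΩ`. -/
def AgreesVE (D : V → V → Prop) (v : V) (Ω : Set (ℕ → V))
    (f : Finset V → Set V ⊕ Set (V × V)) : Prop :=
  ∀ (X : Finset V), ∀ R ∈ Ω, ∀ C, IsSCCIn D ((↑X : Set V)ᶜ) C → HasTailIn R C →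
    (v ∈ C → f X = Sum.inl C) ∧
    (v ∈ (↑X : Set V) → f X = Sum.inr (EdgesBetween D {v} C)) ∧
    (∀ C', IsSCCIn D ((↑X : Set V)ᶜ) C' → v ∈ C' → C' ≠ C →
      f X = Sum.inr (EdgesBetween D C' C))

/-- `f` agrees with the map `f_λ` for the end–vertex limit edge `Ωv`. -/
def AgreesEV (D : V → V → Prop) (Ω : Set (ℕ → V)) (v : V)
    (f : Finset V → Set V ⊕ Set (V × V)) : Prop :=
  ∀ (X : Finset V), ∀ R ∈ Ω, ∀ C, IsSCCIn D ((↑X : Set V)ᶜ) C → HasTailIn R C →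
    (v ∈ C → f X = Sum.inl C) ∧
    (v ∈ (↑X : Set V) → f X = Sum.inr (EdgesBetween D C {v})) ∧
    (∀ C', IsSCCIn D ((↑X : Set V)ᶜ) C' → v ∈ C' → C' ≠ C →
      f X = Sum.inr (EdgesBetween D C C'))

/-- `f` agrees with `f_λ` for the limit edge `l`. -/
def Agrees (D : V → V → Prop) : LimitEdgeObj V → (Finset V → Set V ⊕ Set (V × V)) → Prop
  | LimitEdgeObj.ee Ω₁ Ω₂, f => AgreesEE D Ω₁ Ω₂ f
  | LimitEdgeObj.ve v Ω, f => AgreesVE D v Ω f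
  | LimitEdgeObj.ev Ω v, f => AgreesEV D Ω v f


section LimitEdgeAux
variable {D : V → V → Prop}

private lemma getLast?_append_right' {l₁ l₂ : List V} (h : l₂ ≠ []) :
    (l₁ ++ l₂).getLast? = l₂.getLast? := by
  rw [List.getLast?_append]
  cases hq : l₂.getLast? with
  | none => exact absurd (List.getLast?_eq_none_iff.1 hq) h
  | some b => rfl

private lemma head?_append_left' {l₁ l₂ : List V} (h : l₁ ≠ []) :
    (l₁ ++ l₂).head? = l₁.head? := by
  rw [List.head?_append]
  cases hq : l₁.head? with
  | none => exact absurd (List.head?_eq_none_iff.1 hq) h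
  | some a => rfl

private lemma ReachIn.mono' {S T : Set V} (hST : S ⊆ T) {a b : V} (h : ReachIn D S a b) :
    ReachIn D T a b :=
  ⟨hST h.1, hST h.2.1,
    (Relation.ReflTransGen.mono (by intro x y hxy; exact ⟨hST hxy.1, hxy.2⟩) :
      Relation.ReflTransGen (fun x y => y ∈ S ∧ D x y) ≤ Relation.ReflTransGen (fun x y => y ∈ T ∧ D x y)) a b h.2.2⟩

private lemma ReachIn.trans' {S : Set V} {a b c : V} (h1 : ReachIn D S a b)
    (h2 : ReachIn D S b c) : ReachIn D S a c :=
  ⟨h1.1, h2.2.1, h1.2.2.trans h2.2.2⟩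

private lemma ReachIn.refl' {S : Set V} {a : V} (ha : a ∈ S) : ReachIn D S a a :=
  ⟨ha, ha, Relation.ReflTransGen.refl⟩

private lemma scc_mutual {S C : Set V} (hC : IsSCCIn D S C) {u w : V} (hu : u ∈ C)
    (hw : w ∈ C) : ReachIn D S u w := by
  obtain ⟨a, ha, rfl⟩ := hC
  exact hu.2.trans' hw.1

private lemma reach_list {S : Set V} {a b : V} (ha : a ∈ S)
    (h : Relation.ReflTransGen (fun x y => y ∈ S ∧ D x y) a b) :
    ∃ l : List V, l.Chain' D ∧ l.head? = some a ∧ l.getLast? = some b ∧ ∀ x ∈ l, x ∈ S := by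
  induction h with
  | refl => exact ⟨[a], List.isChain_singleton _, rfl, rfl, by simpa⟩
  | @tail b c hab hbc ih =>
    obtain ⟨l, hc, hh, hl, hmem⟩ := ih
    have hlne : l ≠ [] := by rintro rfl; simp at hh
    refine ⟨l ++ [c], ?_, ?_, List.getLast?_concat, ?_⟩
    · refine List.isChain_append.2 ⟨hc, List.isChain_singleton _, ?_⟩
      intro x hx y hy
      rw [hl, Option.mem_def, Option.some.injEq] at hx
      simp only [List.head?_cons, Option.mem_def, Option.some.injEq] at hy
      subst hx; subst hy; exact hbc.2
    · rw [head?_append_left' hlne, hh]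
    · intro x hx
      rcases List.mem_append.1 hx with h' | h'
      · exact hmem x h'
      · simp at h'; subst h'; exact hbc.1

private lemma dedup_walk : ∀ (n : ℕ) (l : List V), l.length ≤ n → l.Chain' D → l ≠ [] →
    ∃ q : List V, q ≠ [] ∧ q.Nodup ∧ q.Chain' D ∧ q.head? = l.head? ∧
      q.getLast? = l.getLast? ∧ ∀ x ∈ q, x ∈ l := by
  intro n
  induction n with
  | zero =>
    intro l hlen _ hne
    exact absurd (List.length_eq_zero_iff.1 (Nat.le_zero.1 hlen)) hne
  | succ n ih =>
    intro l hlen hchain hne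
    obtain ⟨a, t, rfl⟩ := List.exists_cons_of_ne_nil hne
    by_cases hat : a ∈ t
    · obtain ⟨t₁, t₂, rfl⟩ := List.append_of_mem hat
      have hsuf : (a :: t₂) <:+ a :: (t₁ ++ a :: t₂) := ⟨a :: t₁, by simp⟩
      have hlen' : (a :: t₂).length ≤ n := by
        simp only [List.length_cons, List.length_append] at hlen ⊢; omega
      obtain ⟨q, h1, h2, h3, h4, h5, h6⟩ := ih _ hlen' (hchain.suffix hsuf) (by simp)
      refine ⟨q, h1, h2, h3, ?_, ?_, fun x hx => hsuf.sublist.subset (h6 x hx)⟩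
      · rw [h4]; rfl
      · rw [h5]
        have : a :: (t₁ ++ a :: t₂) = (a :: t₁) ++ (a :: t₂) := by simp
        rw [this, getLast?_append_right' (by simp)]
    · cases t with
      | nil => exact ⟨[a], by simp, by simp, List.isChain_singleton _, rfl, rfl, by simp⟩
      | cons b t' =>
        have hc : (b :: t').Chain' D := (List.isChain_cons.1 hchain).2
        have hlen' : (b :: t').length ≤ n := by simpa using hlen
        obtain ⟨q, h1, h2, h3, h4, h5, h6⟩ := ih _ hlen' hc (by simp)
        refine ⟨a :: q, by simp, ?_, ?_, rfl, ?_, ?_⟩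
        · exact List.nodup_cons.2 ⟨fun hxq => hat (h6 a hxq), h2⟩
        · refine List.isChain_cons.2 ⟨?_, h3⟩
          intro y hy
          rw [h4] at hy
          simp only [List.head?_cons, Option.mem_def, Option.some.injEq] at hy
          subst hy
          exact (List.isChain_cons_cons.1 hchain).1
        · have : a :: q = [a] ++ q := rfl
          rw [this, getLast?_append_right' h1, h5]
          exact (getLast?_append_right' (l₁ := [a]) (by simp)).symm
        · intro x hx
          rcases List.mem_cons.1 hx with h' | h'
          · simp [h']
          · exact List.mem_cons_of_mem _ (h6 x h')

private lemma trimA (A : Set V) : ∀ (n : ℕ) (l : List V), l.length ≤ n → l.Chain' D →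
    (∃ a, l.head? = some a ∧ a ∈ A) →
    ∃ q, q <:+ l ∧ q ≠ [] ∧ (∃ a, q.head? = some a ∧ a ∈ A) ∧
      q.getLast? = l.getLast? ∧ ∀ x ∈ q.tail, x ∉ A := by
  intro n
  induction n with
  | zero =>
    intro l hlen _ hha
    obtain ⟨a, hh, _⟩ := hha
    rw [List.length_eq_zero_iff.1 (Nat.le_zero.1 hlen)] at hh
    simp at hh
  | succ n ih =>
    intro l hlen hch hha
    by_cases h : ∃ a' ∈ l.tail, a' ∈ A
    · obtain ⟨a', ha't, ha'A⟩ := h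
      obtain ⟨a, hh, _⟩ := hha
      have hlne : l ≠ [] := by rintro rfl; simp at hh
      obtain ⟨x, t, rfl⟩ := List.exists_cons_of_ne_nil hlne
      simp only [List.tail_cons] at ha't
      obtain ⟨t₁, t₂, rfl⟩ := List.append_of_mem ha't
      have hsuf : (a' :: t₂) <:+ x :: (t₁ ++ a' :: t₂) := ⟨x :: t₁, by simp⟩
      have hlen' : (a' :: t₂).length ≤ n := by
        simp only [List.length_cons, List.length_append] at hlen ⊢; omega
      obtain ⟨q, h1, h2, h3, h4, h5⟩ := ih _ hlen' (hch.suffix hsuf) ⟨a', rfl, ha'A⟩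
      refine ⟨q, h1.trans hsuf, h2, h3, ?_, h5⟩
      rw [h4]
      have : x :: (t₁ ++ a' :: t₂) = (x :: t₁) ++ (a' :: t₂) := by simp
      rw [this, getLast?_append_right' (by simp)]
    · exact ⟨l, List.suffix_refl l,
        fun h' => by obtain ⟨a, hh, _⟩ := hha; rw [h'] at hh; simp at hh,
        hha, rfl, fun x hx hxA => h ⟨x, hx, hxA⟩⟩

private lemma trimB (B : Set V) : ∀ (n : ℕ) (l : List V), l.length ≤ n → l.Chain' D →
    (∃ b, l.getLast? = some b ∧ b ∈ B) →
    ∃ q, q <+: l ∧ q ≠ [] ∧ q.head? = l.head? ∧ (∃ b, q.getLast? = some b ∧ b ∈ B) ∧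
      ∀ x ∈ q.dropLast, x ∉ B := by
  intro n
  induction n with
  | zero =>
    intro l hlen _ hlb
    obtain ⟨b, hb, _⟩ := hlb
    rw [List.length_eq_zero_iff.1 (Nat.le_zero.1 hlen)] at hb
    simp at hb
  | succ n ih =>
    intro l hlen hch hlb
    by_cases h : ∃ b' ∈ l.dropLast, b' ∈ B
    · obtain ⟨b', hb'd, hb'B⟩ := h
      obtain ⟨b, hb, hbB⟩ := hlb
      have hl : l.dropLast ++ [b] = l := List.dropLast_append_getLast? b hb
      obtain ⟨d₁, d₂, hd⟩ := List.append_of_mem hb'd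
      have hldec : l = d₁ ++ b' :: (d₂ ++ [b]) := by rw [← hl, hd]; simp
      have hpre : (d₁ ++ [b']) <+: l := ⟨d₂ ++ [b], by rw [hldec]; simp⟩
      have hlen' : (d₁ ++ [b']).length ≤ n := by
        have h1 : l.length = (d₁ ++ b' :: (d₂ ++ [b])).length := by rw [← hldec]
        simp only [List.length_append, List.length_cons, List.length_singleton] at h1 hlen ⊢
        omega
      obtain ⟨q, h1, h2, h3, h4, h5⟩ := ih _ hlen' (hch.prefix hpre)
        ⟨b', List.getLast?_concat, hb'B⟩
      refine ⟨q, h1.trans hpre, h2, ?_, h4, h5⟩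
      rw [h3, hldec]
      cases hd1 : d₁ with
      | nil => simp
      | cons c cs => rw [head?_append_left' (by simp), head?_append_left' (by simp)]
    · exact ⟨l, List.prefix_refl l,
        fun h' => by obtain ⟨b, hb, _⟩ := hlb; rw [h'] at hb; simp at hb,
        rfl, hlb, fun x hx hxB => h ⟨x, hx, hxB⟩⟩

private lemma prefix_tail_subset {q l : List V} (h : q <+: l) : ∀ x ∈ q.tail, x ∈ l.tail := by
  obtain ⟨r, rfl⟩ := h
  cases q with
  | nil => simp
  | cons a q' => intro x hx; simp only [List.tail_cons] at hx ⊢; exact List.mem_append_left _ hx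

private lemma walk_to_path (A B : Set V) {l : List V} (hch : l.Chain' D)
    (hha : ∃ a, l.head? = some a ∧ a ∈ A) (hlb : ∃ b, l.getLast? = some b ∧ b ∈ B) :
    ∃ q, IsPathList D q ∧ (∀ x ∈ q, x ∈ l) ∧
      (∃ a, q.head? = some a ∧ a ∈ A) ∧ (∃ b, q.getLast? = some b ∧ b ∈ B) ∧
      (∀ x ∈ q.tail, x ∉ A) ∧ (∀ x ∈ q.dropLast, x ∉ B) := by
  have hne : l ≠ [] := by rintro rfl; obtain ⟨a, h, _⟩ := hha; simp at h
  obtain ⟨p, hp1, hp2, hp3, hp4, hp5, hp6⟩ := dedup_walk l.length l le_rfl hch hne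
  obtain ⟨q₁, hq₁s, hq₁ne, hq₁a, hq₁l, hq₁t⟩ := trimA A p.length p le_rfl hp3
    (by obtain ⟨a, h, hA⟩ := hha; exact ⟨a, hp4 ▸ h, hA⟩)
  obtain ⟨q₂, hq₂p, hq₂ne, hq₂h, hq₂b, hq₂d⟩ := trimB B q₁.length q₁ le_rfl
    (hp3.suffix hq₁s)
    (by obtain ⟨b, h, hB⟩ := hlb; exact ⟨b, by rw [hq₁l, hp5]; exact h, hB⟩)
  have hinf : q₂ <:+: p := (hq₂p.isInfix).trans hq₁s.isInfix
  refine ⟨q₂, ⟨hq₂ne, hp2.sublist hinf.sublist, hp3.infix hinf⟩,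
    fun x hx => hp6 x (hinf.sublist.subset hx),
    by obtain ⟨a, h, hA⟩ := hq₁a; exact ⟨a, hq₂h ▸ h, hA⟩, hq₂b,
    fun x hx => hq₁t x (prefix_tail_subset hq₂p x hx), hq₂d⟩

private lemma key_lemma (D : V → V → Prop) (Rω Rη : ℕ → V)
    (hne : ¬ EndEquiv D Rω Rη) (hl : LimitEdgeEE D Rω Rη)
    (R₁ R₂ : ℕ → V) (h1 : EndEquiv D Rω R₁) (h2 : EndEquiv D Rη R₂) (X : Finset V) :
    ∃ l, IsPathList D l ∧ (∀ x ∈ l, x ∉ (X : Set V)) ∧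
      (∃ a, l.head? = some a ∧ a ∈ Set.range R₁) ∧
      (∃ b, l.getLast? = some b ∧ b ∈ Set.range R₂) ∧
      (∀ x ∈ l.tail, x ∉ Set.range R₁) ∧ (∀ x ∈ l.dropLast, x ∉ Set.range R₂) := by
  classical
  rw [EndEquiv] at hne
  push_neg at hne
  obtain ⟨X₀, hX₀⟩ := hne
  set Y : Finset V := X ∪ X₀ with hY
  obtain ⟨C₁, hC₁scc, hC₁ω, hC₁1⟩ := h1 Y
  obtain ⟨C₂, hC₂scc, hC₂η, hC₂2⟩ := h2 Y
  have hYX₀ : ((Y : Set V))ᶜ ⊆ ((X₀ : Set V))ᶜ := by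
    apply Set.compl_subset_compl.2
    intro x hx
    simp only [hY, Finset.coe_union, Set.mem_union]
    exact Or.inr hx
  have hCC : C₁ ≠ C₂ := by
    rintro rfl
    obtain ⟨a, haY, hCa⟩ := hC₁scc
    have haX₀ : a ∈ ((X₀ : Set V))ᶜ := hYX₀ haY
    refine hX₀ {b | ReachIn D ((X₀ : Set V))ᶜ a b ∧ ReachIn D ((X₀ : Set V))ᶜ b a}
      ⟨a, haX₀, rfl⟩ ?_ ?_
    · obtain ⟨n, hn⟩ := hC₁ω
      refine ⟨n, fun m hm => ?_⟩
      have := hn m hm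
      rw [hCa] at this
      exact ⟨this.1.mono' hYX₀, this.2.mono' hYX₀⟩
    · obtain ⟨n, hn⟩ := hC₂η
      refine ⟨n, fun m hm => ?_⟩
      have := hn m hm
      rw [hCa] at this
      exact ⟨this.1.mono' hYX₀, this.2.mono' hYX₀⟩
  obtain ⟨a, haC₁, b, hbC₂, hab⟩ := hl Y C₁ C₂ hC₁scc hC₁ω hC₂scc hC₂η hCC
  obtain ⟨n₁, hn₁⟩ := hC₁1
  obtain ⟨n₂, hn₂⟩ := hC₂2
  have hr1 : ReachIn D ((Y : Set V))ᶜ (R₁ n₁) a := scc_mutual hC₁scc (hn₁ n₁ le_rfl) haC₁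
  have hr2 : ReachIn D ((Y : Set V))ᶜ b (R₂ n₂) := scc_mutual hC₂scc hbC₂ (hn₂ n₂ le_rfl)
  obtain ⟨l₁, hl₁c, hl₁h, hl₁l, hl₁S⟩ := reach_list hr1.1 hr1.2.2
  obtain ⟨l₂, hl₂c, hl₂h, hl₂l, hl₂S⟩ := reach_list hr2.1 hr2.2.2
  have hl₁ne : l₁ ≠ [] := by rintro rfl; simp at hl₁h
  have hl₂ne : l₂ ≠ [] := by rintro rfl; simp at hl₂h
  have hwc : (l₁ ++ l₂).Chain' D := by
    refine List.isChain_append.2 ⟨hl₁c, hl₂c, ?_⟩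
    intro x hx y hy
    rw [hl₁l, Option.mem_def, Option.some.injEq] at hx
    rw [hl₂h, Option.mem_def, Option.some.injEq] at hy
    subst hx; subst hy; exact hab
  obtain ⟨q, hq1, hq2, hq3, hq4, hq5, hq6⟩ := walk_to_path (Set.range R₁) (Set.range R₂) hwc
    ⟨R₁ n₁, by rw [head?_append_left' hl₁ne, hl₁h], ⟨n₁, rfl⟩⟩
    ⟨R₂ n₂, by rw [getLast?_append_right' hl₂ne, hl₂l], ⟨n₂, rfl⟩⟩
  refine ⟨q, hq1, ?_, hq3, hq4, hq5, hq6⟩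
  intro x hx hxX
  have hxw := hq2 x hx
  have hxY : x ∈ ((Y : Set V))ᶜ := by
    rcases List.mem_append.1 hxw with h' | h'
    · exact hl₁S x h'
    · exact hl₂S x h'
  exact hxY (by simp only [hY, Finset.coe_union, Set.mem_union]; exact Or.inl hxX)

end LimitEdgeAux

/-- A limit edge from `ω` to `η` implies `ω ≤ η`: infinitely many disjoint paths from any ray
representing `ω` to any ray representing `η`. -/
theorem limit_edge_implies_le (D : V → V → Prop) (Rω Rη : ℕ → V)
    (hω : Solid D Rω) (hη : Solid D Rη) (hne : ¬ EndEquiv D Rω Rη)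
    (hl : LimitEdgeEE D Rω Rη) :
    ∀ R₁ R₂, Solid D R₁ → EndEquiv D Rω R₁ → Solid D R₂ → EndEquiv D Rη R₂ →
      DisjointPathsFrom D (Set.range R₁) (Set.range R₂) := by
  classical
  intro R₁ R₂ _ he₁ _ he₂
  have key := key_lemma D Rω Rη hne hl R₁ R₂ he₁ he₂
  choose F hF1 hF2 hF3 hF4 hF5 hF6 using key
  let used : ℕ → Finset V := fun k => Nat.rec ∅ (fun _ U => U ∪ (F U).toFinset) k
  have husedsucc : ∀ k, used (k + 1) = used k ∪ (F (used k)).toFinset := fun k => rfl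
  have hmono : ∀ j k, j ≤ k → used j ⊆ used k := by
    intro j k hjk
    induction k with
    | zero => rw [Nat.le_zero.1 hjk]
    | succ k ih =>
      rcases Nat.lt_or_ge j (k + 1) with h | h
      · exact (ih (Nat.lt_succ_iff.1 h)).trans (by rw [husedsucc]; exact Finset.subset_union_left)
      · rw [Nat.le_antisymm hjk h]
  have hPin : ∀ j, ∀ x ∈ F (used j), x ∈ used (j + 1) := by
    intro j x hx
    rw [husedsucc]
    exact Finset.mem_union_right _ (List.mem_toFinset.2 hx)
  refine ⟨fun k => F (used k), fun k => hF1 _, ?_, fun k => hF3 _, fun k => hF4 _,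
    fun k => hF5 _, fun k => hF6 _⟩
  intro j k hjk x hxj hxk
  rcases Nat.lt_or_ge j k with h | h
  · exact hF2 (used k) x hxk (hmono (j + 1) k h (hPin j x hxj))
  · have hkj : k < j := lt_of_le_of_ne h (Ne.symm hjk)
    exact hF2 (used j) x hxj (hmono (k + 1) j hkj (hPin k x hxk))
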